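/- Let 0<q<1 and let m ≥ 2 be an integer. Then Σ ζ[s,t], summed over all pairs of integers s ≥ 2, t ≥ 2 with s + t = m + 1, equals ζ[m+1] − ζ[m,1]. -/

import Mathlib

/-- The `q`-analog of a natural number: `[k]_q = (1-q^k)/(1-q)`. -/
noncomputable def qnum (q : ℝ) (k : ℕ) : ℝ := (1 - q ^ k) / (1 - q)

/-- The single `q`-zeta value `ζ[n] = Σ_{k≥1} q^{(n-1)k}/[k]_q^n`. -/
noncomputable def qzeta (q : ℝ) (n : ℕ) : ℝ :=
  ∑' k : ℕ, q ^ ((n - 1) * (k + 1)) / (qnum q (k + 1)) ^ n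

/-- The double `q`-zeta value
`ζ[a,b] = Σ_{k₁>k₂>0} (q^{(a-1)k₁}/[k₁]_q^a)(q^{(b-1)k₂}/[k₂]_q^b)`. -/
noncomputable def qzeta2 (q : ℝ) (a b : ℕ) : ℝ :=
  ∑' p : {p : ℕ × ℕ // p.2 < p.1 ∧ 0 < p.2},
    (q ^ ((a - 1) * p.1.1) / (qnum q p.1.1) ^ a) *
      (q ^ ((b - 1) * p.1.2) / (qnum q p.1.2) ^ b)

open Finset Filter

section QZetaAux

variable {q : ℝ}

lemma qnum_eq_sum (hq1 : q ≠ 1) (k : ℕ) : qnum q k = ∑ i ∈ Finset.range k, q ^ i := by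
  have h1 : (1 : ℝ) - q ≠ 0 := sub_ne_zero.mpr (Ne.symm hq1)
  have h2 : q - 1 ≠ 0 := sub_ne_zero.mpr hq1
  rw [qnum, geom_sum_eq hq1, div_eq_div_iff h1 h2]; ring

lemma qnum_nonneg (hq0 : 0 < q) (hq1 : q < 1) (k : ℕ) : 0 ≤ qnum q k := by
  rw [qnum_eq_sum hq1.ne]
  exact Finset.sum_nonneg fun i _ => pow_nonneg hq0.le i

lemma one_le_qnum (hq0 : 0 < q) (hq1 : q < 1) {k : ℕ} (hk : 1 ≤ k) : 1 ≤ qnum q k := by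
  rw [qnum_eq_sum hq1.ne]
  calc (1:ℝ) = ∑ i ∈ Finset.range 1, q ^ i := by simp
  _ ≤ ∑ i ∈ Finset.range k, q ^ i :=
    Finset.sum_le_sum_of_subset_of_nonneg (Finset.range_subset_range.2 hk)
      (fun i _ _ => pow_nonneg hq0.le i)

lemma qnum_pos (hq0 : 0 < q) (hq1 : q < 1) {k : ℕ} (hk : 1 ≤ k) : 0 < qnum q k :=
  lt_of_lt_of_le one_pos (one_le_qnum hq0 hq1 hk)

lemma qnum_mono (hq0 : 0 < q) (hq1 : q < 1) {k l : ℕ} (h : k ≤ l) : qnum q k ≤ qnum q l := by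
  rw [qnum_eq_sum hq1.ne, qnum_eq_sum hq1.ne]
  exact Finset.sum_le_sum_of_subset_of_nonneg (Finset.range_subset_range.2 h)
    (fun i _ _ => pow_nonneg hq0.le i)

lemma qnum_le_bound (hq0 : 0 < q) (hq1 : q < 1) (k : ℕ) : qnum q k ≤ 1 / (1 - q) := by
  have h : (0:ℝ) < 1 - q := by linarith
  rw [qnum]; gcongr; nlinarith [pow_nonneg hq0.le k]

lemma qnum_add (hq1 : q < 1) (a b : ℕ) : qnum q (a + b) = qnum q b + q ^ b * qnum q a := by
  have h : (1:ℝ) - q ≠ 0 := ne_of_gt (by linarith)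
  simp only [qnum, pow_add]; field_simp; ring

lemma q_pow_div_qnum (hq0 : 0 < q) (hq1 : q < 1) {i : ℕ} (hi : 1 ≤ i) :
    q ^ i / qnum q i = 1 / qnum q i - (1 - q) := by
  have h : (1:ℝ) - q ≠ 0 := ne_of_gt (by linarith)
  have h2 : (1:ℝ) - q ^ i ≠ 0 := by
    have : q ^ i < 1 := pow_lt_one₀ hq0.le hq1 (by omega)
    linarith
  rw [qnum]; field_simp; ring

lemma one_div_qnum_sub (hq0 : 0 < q) (hq1 : q < 1) {a : ℕ} (c : ℕ) (ha : 1 ≤ a) :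
    1 / qnum q a - 1 / qnum q (a + c) =
      q ^ a * qnum q c / (qnum q a * qnum q (a + c)) := by
  have h1 : qnum q a ≠ 0 := (qnum_pos hq0 hq1 ha).ne'
  have h2 : qnum q (a + c) ≠ 0 := (qnum_pos hq0 hq1 (by omega)).ne'
  rw [div_sub_div _ _ h1 h2]
  congr 1
  have := qnum_add hq1 c a
  rw [add_comm c a] at this
  rw [this]; ring

lemma one_div_qnum_sub_nonneg (hq0 : 0 < q) (hq1 : q < 1) {a : ℕ} (c : ℕ) (ha : 1 ≤ a) :
    0 ≤ 1 / qnum q a - 1 / qnum q (a + c) := by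
  rw [one_div_qnum_sub hq0 hq1 c ha]
  apply div_nonneg
  · exact mul_nonneg (pow_nonneg hq0.le a) (qnum_nonneg hq0 hq1 c)
  · exact mul_nonneg (qnum_nonneg hq0 hq1 a) (qnum_nonneg hq0 hq1 (a+c))

lemma one_div_qnum_sub_le (hq0 : 0 < q) (hq1 : q < 1) {a : ℕ} (c : ℕ) (ha : 1 ≤ a) :
    1 / qnum q a - 1 / qnum q (a + c) ≤ q ^ a * (1 / (1 - q)) := by
  rw [one_div_qnum_sub hq0 hq1 c ha]
  have hden : 1 ≤ qnum q a * qnum q (a + c) := by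
    nlinarith [one_le_qnum hq0 hq1 ha, one_le_qnum hq0 hq1 (show 1 ≤ a + c by omega)]
  calc q ^ a * qnum q c / (qnum q a * qnum q (a + c)) ≤ q ^ a * qnum q c / 1 :=
        div_le_div_of_nonneg_left
          (mul_nonneg (pow_nonneg hq0.le a) (qnum_nonneg hq0 hq1 c)) one_pos hden
    _ = q ^ a * qnum q c := by rw [div_one]
    _ ≤ q ^ a * (1 / (1 - q)) :=
        mul_le_mul_of_nonneg_left (qnum_le_bound hq0 hq1 c) (pow_nonneg hq0.le a)

lemma frac_le_qpow (hq0 : 0 < q) (hq1 : q < 1) {c k : ℕ} (n : ℕ) (hc : 1 ≤ c) (hk : 1 ≤ k) :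
    q ^ (c * k) / qnum q k ^ n ≤ q ^ k := by
  have h1 : 1 ≤ qnum q k ^ n := one_le_pow₀ (one_le_qnum hq0 hq1 hk)
  calc q ^ (c * k) / qnum q k ^ n ≤ q ^ (c * k) := div_le_self (pow_nonneg hq0.le _) h1
    _ = (q ^ k) ^ c := by rw [← pow_mul, mul_comm]
    _ ≤ (q ^ k) ^ 1 := pow_le_pow_of_le_one (pow_nonneg hq0.le k)
        (pow_le_one₀ hq0.le hq1.le) hc
    _ = q ^ k := pow_one _

lemma frac_nonneg (hq0 : 0 < q) (hq1 : q < 1) (c k n : ℕ) :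
    0 ≤ q ^ c / qnum q k ^ n :=
  div_nonneg (pow_nonneg hq0.le c) (pow_nonneg (qnum_nonneg hq0 hq1 k) n)

lemma frac_le_one (hq0 : 0 < q) (hq1 : q < 1) {k : ℕ} (c n : ℕ) (hk : 1 ≤ k) :
    q ^ c / qnum q k ^ n ≤ 1 := by
  have h1 : (1:ℝ) ≤ qnum q k ^ n := one_le_pow₀ (one_le_qnum hq0 hq1 hk)
  calc q ^ c / qnum q k ^ n ≤ q ^ c := div_le_self (pow_nonneg hq0.le _) h1
    _ ≤ 1 := pow_le_one₀ hq0.le hq1.le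

lemma tendsto_one_div_qnum (hq0 : 0 < q) (hq1 : q < 1) :
    Tendsto (fun d : ℕ => 1 / qnum q (d + 1)) atTop (nhds (1 - q)) := by
  have hpow : Tendsto (fun d : ℕ => q ^ (d + 1)) atTop (nhds 0) :=
    (tendsto_pow_atTop_nhds_zero_of_lt_one hq0.le hq1).comp (tendsto_add_atTop_nat 1)
  have h2 : Tendsto (fun d : ℕ => (1 - q) / (1 - q ^ (d + 1))) atTop
      (nhds ((1 - q) / (1 - 0))) :=
    Tendsto.div tendsto_const_nhds (tendsto_const_nhds.sub hpow) (by norm_num)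
  have h3 : ∀ d : ℕ, 1 / qnum q (d + 1) = (1 - q) / (1 - q ^ (d + 1)) := fun d => by
    rw [qnum, one_div_div]
  rw [show (1:ℝ) - q = (1 - q) / (1 - 0) by norm_num]
  exact h2.congr fun d => (h3 d).symm

lemma telescope (hq0 : 0 < q) (hq1 : q < 1) (c : ℕ) :
    HasSum (fun d : ℕ => 1 / qnum q (d + 1) - 1 / qnum q (c + (d + 1)))
      (∑ i ∈ Finset.range c, q ^ (i + 1) / qnum q (i + 1)) := by
  set g : ℕ → ℝ := fun d => 1 / qnum q (d + 1) with hg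
  have hterm : ∀ d : ℕ, 1 / qnum q (c + (d + 1)) = g (c + d) := fun d => by
    rw [hg]; norm_num [show c + (d+1) = c + d + 1 from by omega]
  have hnonneg : ∀ d : ℕ, 0 ≤ g d - g (c + d) := by
    intro d
    have := one_div_le_one_div_of_le (qnum_pos hq0 hq1 (show 1 ≤ d+1 by omega))
      (qnum_mono hq0 hq1 (show d+1 ≤ c+d+1 by omega))
    simp only [hg]
    linarith [this]
  have key : ∀ N : ℕ, ∑ d ∈ Finset.range N, (g d - g (c + d))
      = ∑ i ∈ Finset.range c, (g i - g (N + i)) := by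
    intro N
    rw [Finset.sum_sub_distrib, Finset.sum_sub_distrib]
    have e1 : ∑ i ∈ Finset.range (c + N), g i
        = ∑ i ∈ Finset.range c, g i + ∑ d ∈ Finset.range N, g (c + d) :=
      Finset.sum_range_add g c N
    have e2 : ∑ i ∈ Finset.range (c + N), g i
        = ∑ d ∈ Finset.range N, g d + ∑ i ∈ Finset.range c, g (N + i) := by
      rw [add_comm c N]; exact Finset.sum_range_add g N c
    linarith [e1, e2]
  have hlim : Tendsto (fun N : ℕ => ∑ i ∈ Finset.range c, (g i - g (N + i))) atTop
      (nhds (∑ i ∈ Finset.range c, (g i - (1 - q)))) := by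
    apply tendsto_finset_sum
    intro i _
    exact tendsto_const_nhds.sub
      ((tendsto_one_div_qnum hq0 hq1).comp (tendsto_add_atTop_nat i))
  have hval : ∑ i ∈ Finset.range c, (g i - (1 - q))
      = ∑ i ∈ Finset.range c, q ^ (i + 1) / qnum q (i + 1) := by
    apply Finset.sum_congr rfl
    intro i _
    rw [hg, q_pow_div_qnum hq0 hq1 (show 1 ≤ i+1 by omega)]
  have hmain : HasSum (fun d : ℕ => g d - g (c + d))
      (∑ i ∈ Finset.range c, q ^ (i + 1) / qnum q (i + 1)) := by
    rw [hasSum_iff_tendsto_nat_of_nonneg hnonneg]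
    rw [← hval]
    exact Tendsto.congr (fun N => (key N).symm) hlim
  have hfun : (fun d : ℕ => 1 / qnum q (d + 1) - 1 / qnum q (c + (d + 1)))
      = fun d => g d - g (c + d) := funext fun d => by rw [hterm d]
  rw [hfun]; exact hmain

lemma per_pair (hq0 : 0 < q) (hq1 : q < 1) (m j d : ℕ) (hm : 2 ≤ m) :
    ∑ s ∈ Finset.Icc 2 m,
      q ^ ((s - 1) * (j + d + 2)) / qnum q (j + d + 2) ^ s *
        (q ^ ((m + 1 - s - 1) * (j + 1)) / qnum q (j + 1) ^ (m + 1 - s))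
    = q ^ ((m - 1) * (j + 1)) / qnum q (j + 1) ^ m *
        (1 / qnum q (d + 1) - 1 / qnum q (j + d + 2))
      - q ^ ((m - 1) * (j + d + 2)) / qnum q (j + d + 2) ^ m *
          (q ^ (d + 1) / qnum q (d + 1)) := by
  obtain ⟨n, rfl⟩ : ∃ n, m = n + 1 := ⟨m - 1, by omega⟩
  have hn : 1 ≤ n := by omega
  set A := qnum q (j + 1) with hA'
  set B := qnum q (j + d + 2) with hB'
  set Dq := qnum q (d + 1) with hD'
  have hA : 0 < A := qnum_pos hq0 hq1 (by omega)
  have hB : 0 < B := qnum_pos hq0 hq1 (by omega)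
  have hD : 0 < Dq := qnum_pos hq0 hq1 (by omega)
  have hBrel : B = Dq + q ^ (d + 1) * A := by
    rw [hB', hA', hD', show j + d + 2 = (j + 1) + (d + 1) from by omega]
    exact qnum_add hq1 (j + 1) (d + 1)
  set X := q ^ (j + d + 2) / B with hX'
  set Y := q ^ (j + 1) / A with hY'
  have step1 : ∑ s ∈ Finset.Icc 2 (n + 1),
      q ^ ((s - 1) * (j + d + 2)) / B ^ s *
        (q ^ ((n + 1 + 1 - s - 1) * (j + 1)) / A ^ (n + 1 + 1 - s))
      = X / (A * B) * ∑ i ∈ Finset.range n, X ^ i * Y ^ (n - 1 - i) := by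
    rw [Finset.mul_sum]
    rw [← Finset.Ico_add_one_right_eq_Icc, Finset.sum_Ico_eq_sum_range]
    apply Finset.sum_congr (by rw [show n + 1 + 1 - 2 = n from by omega])
    intro i hi
    have hi' : i < n := by
      simp only [Finset.mem_range] at hi; omega
    rw [show 2 + i - 1 = i + 1 from by omega,
        show n + 1 + 1 - (2 + i) - 1 = n - 1 - i from by omega,
        show n + 1 + 1 - (2 + i) = (n - 1 - i) + 1 from by omega,
        show (i + 1) * (j + d + 2) = (j + d + 2) * (i + 1) from by ring,
        show (n - 1 - i) * (j + 1) = (j + 1) * (n - 1 - i) from by ring]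
    rw [hX', hY', div_pow, div_pow, ← pow_mul, ← pow_mul]
    field_simp
    ring
  rw [step1]
  have hXY : X - Y = -(q ^ (j + 1) * Dq) / (A * B) := by
    rw [hX', hY', div_sub_div _ _ hB.ne' hA.ne',
        div_eq_div_iff (mul_ne_zero hB.ne' hA.ne') (mul_ne_zero hA.ne' hB.ne'), hBrel,
        show j + d + 2 = (j + 1) + (d + 1) from by omega, pow_add]
    ring
  have hXYne : X - Y ≠ 0 := by
    rw [hXY]
    apply div_ne_zero _ (mul_ne_zero hA.ne' hB.ne')
    exact neg_ne_zero.mpr (mul_ne_zero (pow_ne_zero _ hq0.ne') hD.ne')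
  have hgeom : (∑ i ∈ Finset.range n, X ^ i * Y ^ (n - 1 - i)) = (X ^ n - Y ^ n) / (X - Y) :=
    eq_div_of_mul_eq hXYne (geom_sum₂_mul X Y n)
  rw [hgeom, hXY]
  have hu : q ^ (j + 1) ≠ 0 := pow_ne_zero _ hq0.ne'
  have hv : q ^ (d + 1) ≠ 0 := pow_ne_zero _ hq0.ne'
  rw [show (n + 1 - 1) * (j + 1) = (j + 1) * n from by simp [Nat.mul_comm],
      show (n + 1 - 1) * (j + d + 2) = (j + d + 2) * n from by simp [Nat.mul_comm],
      pow_mul, pow_mul,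
      show j + d + 2 = (j + 1) + (d + 1) from by omega, pow_add]
  rw [hX', hY', show j + d + 2 = (j + 1) + (d + 1) from by omega, pow_add]
  have hBne : Dq + q ^ (d + 1) * A ≠ 0 := by rw [← hBrel]; exact hB.ne'
  rw [hBrel]
  simp only [div_pow]
  field_simp
  ring

end QZetaAux

/-- The reindexing of pairs `k₁ > k₂ > 0` by `ℕ × ℕ`. -/
def pairEquiv : ℕ × ℕ ≃ {p : ℕ × ℕ // p.2 < p.1 ∧ 0 < p.2} where
  toFun p := ⟨(p.1 + p.2 + 2, p.1 + 1), by omega, by omega⟩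
  invFun p := (p.1.2 - 1, p.1.1 - p.1.2 - 1)
  left_inv p := by
    obtain ⟨j, d⟩ := p
    simp
    omega
  right_inv p := by
    obtain ⟨⟨k, j⟩, h1, h2⟩ := p
    apply Subtype.ext
    simp
    omega

lemma qzeta2_eq (q : ℝ) (a c : ℕ) :
    qzeta2 q a c = ∑' p : ℕ × ℕ,
      q ^ ((a - 1) * (p.1 + p.2 + 2)) / qnum q (p.1 + p.2 + 2) ^ a *
        (q ^ ((c - 1) * (p.1 + 1)) / qnum q (p.1 + 1) ^ c) := by
  rw [qzeta2]
  exact (pairEquiv.tsum_eq _).symm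

section Main

variable {q : ℝ}

lemma summable_geom_pair (hq0 : 0 < q) (hq1 : q < 1) :
    Summable (fun p : ℕ × ℕ => q ^ p.1 * q ^ p.2) :=
  Summable.mul_of_nonneg (summable_geometric_of_lt_one hq0.le hq1)
    (summable_geometric_of_lt_one hq0.le hq1)
    (fun i => pow_nonneg hq0.le i) (fun i => pow_nonneg hq0.le i)

lemma summable_of_le_geom (hq0 : 0 < q) (hq1 : q < 1) {C : ℝ} {f : ℕ × ℕ → ℝ}
    (h0 : ∀ p, 0 ≤ f p) (hle : ∀ p, f p ≤ C * (q ^ p.1 * q ^ p.2)) : Summable f :=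
  Summable.of_nonneg_of_le h0 hle ((summable_geom_pair hq0 hq1).mul_left C)

lemma qpow_pair_le (hq0 : 0 < q) (hq1 : q < 1) (j d : ℕ) :
    q ^ (j + d + 2) ≤ q ^ j * q ^ d := by
  have h : q ^ (j + d + 2) = q ^ j * q ^ d * q ^ 2 := by rw [← pow_add, ← pow_add]
  nlinarith [pow_nonneg hq0.le j, pow_nonneg hq0.le d, pow_nonneg hq0.le 2,
    pow_le_one₀ hq0.le hq1.le (n := 2), mul_nonneg (pow_nonneg hq0.le j) (pow_nonneg hq0.le d)]

end Main

/-- `v q m k = q^{(m-1)k}/[k]^m`. -/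
noncomputable def vv (q : ℝ) (m k : ℕ) : ℝ := q ^ ((m - 1) * k) / qnum q k ^ m

/-- `h q i = q^i/[i]`. -/
noncomputable def hh (q : ℝ) (i : ℕ) : ℝ := q ^ i / qnum q i

noncomputable def PP1 (q : ℝ) (m : ℕ) (p : ℕ × ℕ) : ℝ :=
  vv q m (p.1 + 1) * (1 / qnum q (p.2 + 1) - 1 / qnum q (p.1 + p.2 + 2))

noncomputable def PP2 (q : ℝ) (m : ℕ) (p : ℕ × ℕ) : ℝ :=
  vv q m (p.1 + p.2 + 2) * hh q (p.2 + 1)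

noncomputable def GG (q : ℝ) (m : ℕ) (p : ℕ × ℕ) : ℝ :=
  if p.2 < p.1 then vv q m (p.1 + 1) * hh q (p.2 + 1) else 0

section Main2

variable {q : ℝ}

lemma vv_nonneg (hq0 : 0 < q) (hq1 : q < 1) (m k : ℕ) : 0 ≤ vv q m k :=
  frac_nonneg hq0 hq1 _ _ _

lemma vv_le (hq0 : 0 < q) (hq1 : q < 1) {m k : ℕ} (hm : 2 ≤ m) (hk : 1 ≤ k) :
    vv q m k ≤ q ^ k :=
  frac_le_qpow hq0 hq1 m (by omega) hk

lemma hh_nonneg (hq0 : 0 < q) (hq1 : q < 1) (i : ℕ) : 0 ≤ hh q i := by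
  have := frac_nonneg hq0 hq1 i i 1
  simpa [hh] using this

lemma hh_le (hq0 : 0 < q) (hq1 : q < 1) {i : ℕ} (hi : 1 ≤ i) : hh q i ≤ q ^ i := by
  unfold hh
  exact div_le_self (pow_nonneg hq0.le _) (one_le_qnum hq0 hq1 hi)

lemma hh_le_one (hq0 : 0 < q) (hq1 : q < 1) {i : ℕ} (hi : 1 ≤ i) : hh q i ≤ 1 := by
  have := frac_le_one hq0 hq1 (k := i) i 1 hi
  simpa [hh] using this

lemma summable_PP1 (hq0 : 0 < q) (hq1 : q < 1) {m : ℕ} (hm : 2 ≤ m) :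
    Summable (PP1 q m) := by
  have h1q : (0:ℝ) < 1 - q := by linarith
  apply summable_of_le_geom hq0 hq1 (C := 1 / (1 - q))
  · intro p
    apply mul_nonneg (vv_nonneg hq0 hq1 _ _)
    have := one_div_qnum_sub_nonneg hq0 hq1 (a := p.2 + 1) (p.1 + 1) (by omega)
    rwa [show p.2 + 1 + (p.1 + 1) = p.1 + p.2 + 2 from by omega] at this
  · intro p
    have h1 : vv q m (p.1 + 1) ≤ q ^ (p.1 + 1) := vv_le hq0 hq1 hm (by omega)
    have h2 : 1 / qnum q (p.2 + 1) - 1 / qnum q (p.1 + p.2 + 2)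
        ≤ q ^ (p.2 + 1) * (1 / (1 - q)) := by
      have := one_div_qnum_sub_le hq0 hq1 (a := p.2 + 1) (p.1 + 1) (by omega)
      rwa [show p.2 + 1 + (p.1 + 1) = p.1 + p.2 + 2 from by omega] at this
    have h4 : 0 ≤ 1 / qnum q (p.2 + 1) - 1 / qnum q (p.1 + p.2 + 2) := by
      have := one_div_qnum_sub_nonneg hq0 hq1 (a := p.2 + 1) (p.1 + 1) (by omega)
      rwa [show p.2 + 1 + (p.1 + 1) = p.1 + p.2 + 2 from by omega] at this
    calc PP1 q m p ≤ q ^ (p.1 + 1) * (q ^ (p.2 + 1) * (1 / (1 - q))) :=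
          mul_le_mul h1 h2 h4 (pow_nonneg hq0.le _)
      _ = 1 / (1 - q) * (q ^ (p.1 + 1) * q ^ (p.2 + 1)) := by ring
      _ ≤ 1 / (1 - q) * (q ^ p.1 * q ^ p.2) := by
          apply mul_le_mul_of_nonneg_left _ (by positivity)
          rw [← pow_add, show p.1 + 1 + (p.2 + 1) = p.1 + p.2 + 2 from by omega]
          exact qpow_pair_le hq0 hq1 _ _

lemma summable_PP2 (hq0 : 0 < q) (hq1 : q < 1) {m : ℕ} (hm : 2 ≤ m) :
    Summable (PP2 q m) := by
  apply summable_of_le_geom hq0 hq1 (C := 1)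
  · intro p
    exact mul_nonneg (vv_nonneg hq0 hq1 _ _) (hh_nonneg hq0 hq1 _)
  · intro p
    calc PP2 q m p ≤ q ^ (p.1 + p.2 + 2) * 1 :=
          mul_le_mul (vv_le hq0 hq1 hm (by omega)) (hh_le_one hq0 hq1 (by omega))
            (hh_nonneg hq0 hq1 _) (pow_nonneg hq0.le _)
      _ = q ^ (p.1 + p.2 + 2) := by rw [mul_one]
      _ ≤ q ^ p.1 * q ^ p.2 := qpow_pair_le hq0 hq1 _ _
      _ = 1 * (q ^ p.1 * q ^ p.2) := by rw [one_mul]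

lemma summable_GG (hq0 : 0 < q) (hq1 : q < 1) {m : ℕ} (hm : 2 ≤ m) :
    Summable (GG q m) := by
  apply summable_of_le_geom hq0 hq1 (C := 1)
  · intro p
    unfold GG
    split
    · exact mul_nonneg (vv_nonneg hq0 hq1 _ _) (hh_nonneg hq0 hq1 _)
    · exact le_refl 0
  · intro p
    rw [one_mul]
    unfold GG
    split
    · calc vv q m (p.1 + 1) * hh q (p.2 + 1) ≤ q ^ (p.1 + 1) * q ^ (p.2 + 1) :=
            mul_le_mul (vv_le hq0 hq1 hm (by omega)) (hh_le hq0 hq1 (by omega))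
              (hh_nonneg hq0 hq1 _) (pow_nonneg hq0.le _)
        _ = q ^ (p.1 + p.2 + 2) := by
            rw [← pow_add, show p.1 + 1 + (p.2 + 1) = p.1 + p.2 + 2 from by omega]
        _ ≤ q ^ p.1 * q ^ p.2 := qpow_pair_le hq0 hq1 _ _
    · positivity

lemma summable_F (hq0 : 0 < q) (hq1 : q < 1) {m : ℕ} (hm : 2 ≤ m) {s : ℕ}
    (hs : 2 ≤ s) (hsm : s ≤ m) :
    Summable (fun p : ℕ × ℕ =>
      q ^ ((s - 1) * (p.1 + p.2 + 2)) / qnum q (p.1 + p.2 + 2) ^ s *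
        (q ^ ((m + 1 - s - 1) * (p.1 + 1)) / qnum q (p.1 + 1) ^ (m + 1 - s))) := by
  apply summable_of_le_geom hq0 hq1 (C := 1)
  · intro p
    exact mul_nonneg (frac_nonneg hq0 hq1 _ _ _) (frac_nonneg hq0 hq1 _ _ _)
  · intro p
    rw [one_mul]
    calc q ^ ((s - 1) * (p.1 + p.2 + 2)) / qnum q (p.1 + p.2 + 2) ^ s *
        (q ^ ((m + 1 - s - 1) * (p.1 + 1)) / qnum q (p.1 + 1) ^ (m + 1 - s))
        ≤ q ^ (p.1 + p.2 + 2) * 1 :=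
          mul_le_mul (frac_le_qpow hq0 hq1 s (by omega) (by omega))
            (frac_le_one hq0 hq1 _ _ (by omega)) (frac_nonneg hq0 hq1 _ _ _)
            (pow_nonneg hq0.le _)
      _ = q ^ (p.1 + p.2 + 2) := by rw [mul_one]
      _ ≤ q ^ p.1 * q ^ p.2 := qpow_pair_le hq0 hq1 _ _

lemma summable_vh (hq0 : 0 < q) (hq1 : q < 1) {m : ℕ} (hm : 2 ≤ m) :
    Summable (fun j : ℕ => vv q m (j + 1) * hh q (j + 1)) := by
  apply Summable.of_nonneg_of_le
    (fun j => mul_nonneg (vv_nonneg hq0 hq1 _ _) (hh_nonneg hq0 hq1 _))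
    (fun j => ?_) (summable_geometric_of_lt_one hq0.le hq1)
  calc vv q m (j + 1) * hh q (j + 1) ≤ q ^ (j + 1) * 1 :=
        mul_le_mul (vv_le hq0 hq1 hm (by omega)) (hh_le_one hq0 hq1 (by omega))
          (hh_nonneg hq0 hq1 _) (pow_nonneg hq0.le _)
    _ = q ^ j * q := by rw [mul_one, pow_succ]
    _ ≤ q ^ j * 1 := by
        exact mul_le_mul_of_nonneg_left hq1.le (pow_nonneg hq0.le j)
    _ = q ^ j := by rw [mul_one]

lemma summable_u (hq0 : 0 < q) (hq1 : q < 1) {m : ℕ} (hm : 2 ≤ m) :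
    Summable (fun j : ℕ => ∑ i ∈ Finset.range j, vv q m (j + 1) * hh q (i + 1)) := by
  have hgeo : Summable (fun j : ℕ => (j : ℝ) * q ^ j) := by
    have := summable_pow_mul_geometric_of_norm_lt_one 1
      (r := q) (by rwa [Real.norm_eq_abs, abs_of_pos hq0])
    simpa [pow_one] using this
  apply Summable.of_nonneg_of_le
    (fun j => Finset.sum_nonneg fun i _ =>
      mul_nonneg (vv_nonneg hq0 hq1 _ _) (hh_nonneg hq0 hq1 _))
    (fun j => ?_) hgeo
  calc ∑ i ∈ Finset.range j, vv q m (j + 1) * hh q (i + 1)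
      ≤ ∑ i ∈ Finset.range j, q ^ (j + 1) :=
        Finset.sum_le_sum fun i _ => by
          calc vv q m (j + 1) * hh q (i + 1) ≤ q ^ (j + 1) * 1 :=
                mul_le_mul (vv_le hq0 hq1 hm (by omega)) (hh_le_one hq0 hq1 (by omega))
                  (hh_nonneg hq0 hq1 _) (pow_nonneg hq0.le _)
            _ = q ^ (j + 1) := by rw [mul_one]
    _ = (j : ℝ) * q ^ (j + 1) := by
        rw [Finset.sum_const, Finset.card_range, nsmul_eq_mul]
    _ ≤ (j : ℝ) * q ^ j := by
        apply mul_le_mul_of_nonneg_left _ (Nat.cast_nonneg j)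
        exact pow_le_pow_of_le_one hq0.le hq1.le (by omega)

end Main2

section Main3

variable {q : ℝ}

lemma tsum_vh (hq0 : 0 < q) (hq1 : q < 1) {m : ℕ} (hm : 2 ≤ m) :
    ∑' j : ℕ, vv q m (j + 1) * hh q (j + 1) = qzeta q (m + 1) := by
  rw [qzeta]
  apply tsum_congr
  intro k
  unfold vv hh
  rw [Nat.add_sub_cancel]
  have he : (m - 1) * (k + 1) + (k + 1) = m * (k + 1) := by
    have h1 : m - 1 + 1 = m := by omega
    calc (m - 1) * (k + 1) + (k + 1) = ((m - 1) + 1) * (k + 1) := by ring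
      _ = m * (k + 1) := by rw [h1]
  rw [div_mul_div_comm, ← pow_add, ← pow_succ, he]

lemma tsum_GG_eq (hq0 : 0 < q) (hq1 : q < 1) {m : ℕ} (hm : 2 ≤ m) :
    ∑' p : ℕ × ℕ, GG q m p
      = ∑' p : ℕ × ℕ, vv q m (p.1 + p.2 + 2) * hh q (p.1 + 1) := by
  have hinj : Function.Injective (fun p : ℕ × ℕ => ((p.1 + p.2 + 1, p.1) : ℕ × ℕ)) := by
    intro a b hab
    simp only [Prod.mk.injEq] at hab
    obtain ⟨h1, h2⟩ := hab
    have : a.1 = b.1 := h2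
    have : a.2 = b.2 := by omega
    exact Prod.ext h2 this
  have hsupp : Function.support (GG q m)
      ⊆ Set.range (fun p : ℕ × ℕ => ((p.1 + p.2 + 1, p.1) : ℕ × ℕ)) := by
    intro p hp
    obtain ⟨a, b⟩ := p
    have hba : b < a := by
      by_contra hc
      apply hp
      unfold GG
      simp only
      rw [if_neg hc]
    refine ⟨(b, a - b - 1), ?_⟩
    show (b + (a - b - 1) + 1, b) = (a, b)
    rw [Prod.mk.injEq]
    exact ⟨by omega, rfl⟩
  have h := hinj.tsum_eq (f := GG q m) hsupp
  rw [← h]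
  apply tsum_congr
  intro p
  unfold GG
  dsimp only
  rw [if_pos (by omega : p.1 < p.1 + p.2 + 1)]

lemma tsum_PP2_eq (hq0 : 0 < q) (hq1 : q < 1) {m : ℕ} (hm : 2 ≤ m) :
    ∑' p : ℕ × ℕ, PP2 q m p
      = ∑' p : ℕ × ℕ, vv q m (p.1 + p.2 + 2) * hh q (p.1 + 1) := by
  have h := (Equiv.prodComm ℕ ℕ).tsum_eq (PP2 q m)
  rw [← h]
  apply tsum_congr
  intro p
  unfold PP2
  simp only [Equiv.prodComm_apply, Prod.fst_swap, Prod.snd_swap]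
  rw [show p.2 + p.1 + 2 = p.1 + p.2 + 2 from by omega]

lemma tsum_PP1_eq (hq0 : 0 < q) (hq1 : q < 1) {m : ℕ} (hm : 2 ≤ m) :
    ∑' p : ℕ × ℕ, PP1 q m p
      = qzeta q (m + 1) + ∑' p : ℕ × ℕ, vv q m (p.1 + p.2 + 2) * hh q (p.1 + 1) := by
  have hsP1 := summable_PP1 hq0 hq1 hm
  rw [Summable.tsum_prod' hsP1 hsP1.prod_factor]
  have e2 : ∀ j : ℕ, ∑' d : ℕ, PP1 q m (j, d)
      = vv q m (j + 1) * ∑ i ∈ Finset.range (j + 1), hh q (i + 1) := by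
    intro j
    have ht := telescope hq0 hq1 (j + 1)
    have hfun : (fun d : ℕ => 1 / qnum q (d + 1) - 1 / qnum q (j + 1 + (d + 1)))
        = fun d : ℕ => 1 / qnum q (d + 1) - 1 / qnum q (j + d + 2) :=
      funext fun d => by rw [show j + 1 + (d + 1) = j + d + 2 from by omega]
    rw [hfun] at ht
    have hr : ∑' d : ℕ, PP1 q m (j, d)
        = ∑' d : ℕ, vv q m (j + 1) * (1 / qnum q (d + 1) - 1 / qnum q (j + d + 2)) := rfl
    rw [hr, tsum_mul_left, ht.tsum_eq]
    simp [hh]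
  rw [tsum_congr e2]
  have e3 : ∀ j : ℕ, vv q m (j + 1) * ∑ i ∈ Finset.range (j + 1), hh q (i + 1)
      = (∑ i ∈ Finset.range j, vv q m (j + 1) * hh q (i + 1))
        + vv q m (j + 1) * hh q (j + 1) := by
    intro j
    rw [Finset.sum_range_succ, mul_add, Finset.mul_sum]
  rw [tsum_congr e3]
  rw [Summable.tsum_add (summable_u hq0 hq1 hm) (summable_vh hq0 hq1 hm)]
  rw [tsum_vh hq0 hq1 hm]
  rw [add_comm]
  congr 1
  have e4 : ∀ j : ℕ, ∑ i ∈ Finset.range j, vv q m (j + 1) * hh q (i + 1)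
      = ∑' i : ℕ, GG q m (j, i) := by
    intro j
    rw [tsum_eq_sum (s := Finset.range j) (f := fun i => GG q m (j, i)) ?_]
    · apply Finset.sum_congr rfl
      intro i hi
      show _ = GG q m (j, i)
      unfold GG
      dsimp only
      rw [if_pos (Finset.mem_range.mp hi)]
    · intro i hi
      show GG q m (j, i) = 0
      unfold GG
      dsimp only
      rw [if_neg (by simpa using hi)]
  rw [tsum_congr e4]
  rw [← Summable.tsum_prod' (summable_GG hq0 hq1 hm) (summable_GG hq0 hq1 hm).prod_factor]
  exact tsum_GG_eq hq0 hq1 hm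

lemma main_sum (hq0 : 0 < q) (hq1 : q < 1) {m : ℕ} (hm : 2 ≤ m) :
    ∑ s ∈ Finset.Icc 2 m, qzeta2 q s (m + 1 - s) = qzeta q (m + 1) := by
  have step1 : ∀ s ∈ Finset.Icc 2 m, qzeta2 q s (m + 1 - s)
      = ∑' p : ℕ × ℕ, q ^ ((s - 1) * (p.1 + p.2 + 2)) / qnum q (p.1 + p.2 + 2) ^ s *
          (q ^ ((m + 1 - s - 1) * (p.1 + 1)) / qnum q (p.1 + 1) ^ (m + 1 - s)) := by
    intro s hs
    exact qzeta2_eq q s (m + 1 - s)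
  rw [Finset.sum_congr rfl step1]
  rw [← Summable.tsum_finsetSum (fun s hs => summable_F hq0 hq1 hm
    (Finset.mem_Icc.mp hs).1 (Finset.mem_Icc.mp hs).2)]
  have step2 : ∀ p : ℕ × ℕ, (∑ s ∈ Finset.Icc 2 m,
      q ^ ((s - 1) * (p.1 + p.2 + 2)) / qnum q (p.1 + p.2 + 2) ^ s *
        (q ^ ((m + 1 - s - 1) * (p.1 + 1)) / qnum q (p.1 + 1) ^ (m + 1 - s)))
      = PP1 q m p - PP2 q m p := by
    intro p
    rw [per_pair hq0 hq1 m p.1 p.2 hm]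
    rfl
  rw [tsum_congr step2]
  rw [Summable.tsum_sub (summable_PP1 hq0 hq1 hm) (summable_PP2 hq0 hq1 hm)]
  rw [tsum_PP1_eq hq0 hq1 hm, tsum_PP2_eq hq0 hq1 hm]
  ring

end Main3

/-- Sum of double q-zeta values with both arguments at least 2 and weight m+1. -/
theorem qzeta2_weight_sum (q : ℝ) (hq0 : 0 < q) (hq1 : q < 1) (m : ℕ) (hm : 2 ≤ m) :
    (∑ s ∈ Finset.Icc 2 (m - 1), qzeta2 q s (m + 1 - s))
      = qzeta q (m + 1) - qzeta2 q m 1 := by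
  have hmain := main_sum hq0 hq1 hm (q := q)
  have hsplit := Finset.sum_Icc_succ_top (a := 2) (b := m - 1) (by omega)
    (fun s => qzeta2 q s (m + 1 - s))
  rw [show m - 1 + 1 = m from by omega] at hsplit
  rw [show m + 1 - m = 1 from by omega] at hsplit
  linarith [hmain, hsplit]
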